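/- For $n = 3$ and two vector variables, the following polynomial identity holds among polarized power sums (writing $x = x_1$, $y = x_2$): $6[x^2y][xy] - 3[xy^2][x^2] - 2[x^2y][x][y] + [xy^2][x]^2 - 4[xy]^2[x] + 2[xy][x]^2[y] - 3[x^3][y^2] + 4[x^2][x][y^2] - [x]^3[y^2] + [x^3][y]^2 - [x^2][x][y]^2 = 0$. -/
import Mathlib


open MvPolynomial

/-- `[x^a y^b] = ∑_{i=1}^3 x_i^a y_i^b` in `ℂ[x₁,x₂,x₃,y₁,y₂,y₃]`. -/
noncomputable def br (a b : ℕ) : MvPolynomial (Fin 2 × Fin 3) ℂ :=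
  ∑ i : Fin 3, X ((0 : Fin 2), i) ^ a * X ((1 : Fin 2), i) ^ b

/-- the relation `J_{3,2}` holds among polarized power sums. -/
theorem relation_J32 :
    6 * br 2 1 * br 1 1 - 3 * br 1 2 * br 2 0 - 2 * br 2 1 * br 1 0 * br 0 1
    + br 1 2 * br 1 0 ^ 2 - 4 * br 1 1 ^ 2 * br 1 0 + 2 * br 1 1 * br 1 0 ^ 2 * br 0 1
    - 3 * br 3 0 * br 0 2 + 4 * br 2 0 * br 1 0 * br 0 2 - br 1 0 ^ 3 * br 0 2
    + br 3 0 * br 0 1 ^ 2 - br 2 0 * br 1 0 * br 0 1 ^ 2 = 0 := by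
  simp only [br, Fin.sum_univ_succ, Fin.sum_univ_zero]
  ring
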